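/- Let a > 0, c ≠ 0, and |σ| < −μ (so (μ,σ) lies in the delay-independent stability cone). If the initial function φ is continuous and satisfies |φ(t)| ≤ |a/c| for all t ∈ [−2a, 0], then every solution u of the model DDE on [0,∞) satisfies u(t) → 0 as t → ∞. -/

import Mathlib

/-- A solution of the model state-dependent DDE
`u'(t) = μ u(t) + σ u(t - a - c u(t))` for `t ≥ 0`, with initial function `φ` on `(-∞,0]`. -/
def IsModelSolution (μ σ c a : ℝ) (φ u : ℝ → ℝ) : Prop :=
  Continuous u ∧ (∀ t ≤ (0 : ℝ), u t = φ t) ∧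
    ∀ t, (0 : ℝ) ≤ t →
      HasDerivWithinAt u (μ * u t + σ * u (t - a - c * u t)) (Set.Ici (0 : ℝ)) t

open Set Filter Real

/-- Theorem 4.1 of Humphries–Magpantay: asymptotic stability in the
delay-independent cone `|σ| < -μ`. -/
theorem stmt_7 (μ σ c a : ℝ) (ha : 0 < a) (hc : c ≠ 0) (hcone : |σ| < -μ)
    (φ : ℝ → ℝ) (hφcont : ContinuousOn φ (Set.Iic 0))
    (hφ : ∀ t ∈ Set.Icc (-(2 * a)) 0, |φ t| ≤ |a / c|)
    (u : ℝ → ℝ) (hsol : IsModelSolution μ σ c a φ u) :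
    Filter.Tendsto u Filter.atTop (nhds 0) := by
  obtain ⟨hu_cont, hu_eq, hu_deriv⟩ := hsol
  set K : ℝ := |a / c| with hKdef
  have hK0 : 0 < K := abs_pos.mpr (div_ne_zero ha.ne' hc)
  have hμ : μ < 0 := by
    have h0 : (0:ℝ) ≤ |σ| := abs_nonneg σ
    linarith
  have hca : |c| * K = a := by
    rw [hKdef, abs_div]
    rw [mul_div_cancel₀ _ (abs_ne_zero.mpr hc)]
    exact abs_of_pos ha
  -- bound on the initial segment
  have hinit : ∀ t, -(2*a) ≤ t → t ≤ 0 → |u t| ≤ K := by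
    intro t h1 h2
    rw [hu_eq t h2]
    exact hφ t ⟨by linarith, h2⟩
  -- Step 1: global invariance |u t| ≤ K for all t ≥ 0.
  have hbd0 : ∀ t, 0 ≤ t → |u t| ≤ K := by
    by_contra hcon
    push_neg at hcon
    obtain ⟨t0, ht00, hKt0⟩ := hcon
    set S : Set ℝ := {t | 0 ≤ t ∧ K < |u t|} with hSdef
    have hS_ne : S.Nonempty := ⟨t0, ht00, hKt0⟩
    have hS_bdd : BddBelow S := ⟨0, fun s hs => hs.1⟩
    set t1 : ℝ := sInf S with ht1def
    have ht1_0 : 0 ≤ t1 := le_csInf hS_ne fun s hs => hs.1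
    have ht1_ge : K ≤ |u t1| := by
      have hclosed : IsClosed {t : ℝ | K ≤ |u t|} :=
        isClosed_le continuous_const hu_cont.abs
      have hmem : t1 ∈ closure S := csInf_mem_closure hS_ne hS_bdd
      exact closure_minimal (fun s hs => le_of_lt hs.2) hclosed hmem
    have hpre : ∀ s, -(2*a) ≤ s → s < t1 → |u s| ≤ K := by
      intro s hs2a hst1
      rcases le_or_gt s 0 with h | h
      · exact hinit s hs2a h
      · by_contra hK'
        push_neg at hK'
        exact absurd (csInf_le hS_bdd ⟨h.le, hK'⟩) (not_le.mpr hst1)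
    have ht1_le : |u t1| ≤ K := by
      rcases eq_or_lt_of_le ht1_0 with h | h
      · exact hinit t1 (by rw [← h]; linarith) (by rw [← h])
      · have htd : Tendsto (fun t => |u t|) (nhdsWithin t1 (Iio t1)) (nhds |u t1|) :=
          (hu_cont.abs.tendsto t1).mono_left nhdsWithin_le_nhds
        refine le_of_tendsto htd ?_
        filter_upwards [Ioo_mem_nhdsLT_of_mem (⟨h, le_refl t1⟩ : t1 ∈ Ioc (0:ℝ) t1)] with s hs
        exact hpre s (by linarith [hs.1]) hs.2
    have ht1K : |u t1| = K := le_antisymm ht1_le ht1_ge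
    have ht1_notS : t1 ∉ S := fun hs => absurd ht1K (ne_of_gt hs.2)
    -- delayed argument
    set τ : ℝ := t1 - a - c * u t1 with hτdef
    have hcu : |c * u t1| = a := by rw [abs_mul, ht1K, hca]
    have hτ1 : t1 - 2*a ≤ τ := by
      have := abs_le.mp hcu.le
      simp only [hτdef]; linarith [this.2]
    have hτ2 : τ ≤ t1 := by
      have := abs_le.mp hcu.le
      simp only [hτdef]; linarith [this.1]
    have hτbd : |u τ| ≤ K := by
      rcases eq_or_lt_of_le hτ2 with h | h
      · rw [h, ht1K]
      · exact hpre τ (by linarith) h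
    set d : ℝ := μ * u t1 + σ * u τ with hddef
    have hστ : |σ * u τ| ≤ |σ| * K := by
      rw [abs_mul]
      exact mul_le_mul_of_nonneg_left hτbd (abs_nonneg σ)
    have hslope : Tendsto (slope u t1) (nhdsWithin t1 (Ioi t1)) (nhds d) := by
      have h1 := hasDerivWithinAt_iff_tendsto_slope.mp (hu_deriv t1 ht1_0)
      exact h1.mono_left (nhdsWithin_mono t1 fun x hx =>
        ⟨ht1_0.trans (le_of_lt hx), ne_of_gt hx⟩)
    have htu : Tendsto u (nhdsWithin t1 (Ioi t1)) (nhds (u t1)) :=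
      (hu_cont.tendsto t1).mono_left nhdsWithin_le_nhds
    have hev : ∀ᶠ x in nhdsWithin t1 (Ioi t1), x ∉ S := by
      rcases (abs_eq hK0.le).mp ht1K with hpos | hneg
      · have hdneg : d < 0 := by
          have h1 : σ * u τ ≤ |σ| * K := (le_abs_self _).trans hστ
          have h2 : (μ + |σ|) * K < 0 :=
            mul_neg_of_neg_of_pos (by linarith) hK0
          rw [hddef, hpos]; nlinarith
        have he1 : ∀ᶠ x in nhdsWithin t1 (Ioi t1), slope u t1 x < 0 :=
          hslope.eventually_lt_const hdneg
        have he2 : ∀ᶠ x in nhdsWithin t1 (Ioi t1), -K < u x := by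
          apply htu.eventually_const_lt; rw [hpos]; linarith
        filter_upwards [he1, he2, self_mem_nhdsWithin] with x h1 h2 hx
        intro hxS
        have hx' : (0:ℝ) < x - t1 := by simpa using sub_pos.mpr (mem_Ioi.mp hx)
        have : u x - u t1 < 0 := by
          have := h1
          rw [slope_def_field] at this
          have h3 := (div_neg_iff).mp this
          rcases h3 with ⟨_, h4⟩ | ⟨h4, _⟩
          · linarith
          · exact h4
        have hux : u x < K := by rw [← hpos]; linarith
        have : |u x| < K := abs_lt.mpr ⟨h2, hux⟩
        exact absurd hxS.2 (not_lt.mpr this.le)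
      · have hdpos : 0 < d := by
          have h1 : -(|σ| * K) ≤ σ * u τ := neg_le_of_abs_le hστ
          have h2 : 0 < (-μ - |σ|) * K :=
            mul_pos (by linarith) hK0
          rw [hddef, hneg]; nlinarith
        have he1 : ∀ᶠ x in nhdsWithin t1 (Ioi t1), 0 < slope u t1 x :=
          hslope.eventually_const_lt hdpos
        have he2 : ∀ᶠ x in nhdsWithin t1 (Ioi t1), u x < K := by
          apply htu.eventually_lt_const; rw [hneg]; linarith
        filter_upwards [he1, he2, self_mem_nhdsWithin] with x h1 h2 hx
        intro hxS
        have hx' : (0:ℝ) < x - t1 := by simpa using sub_pos.mpr (mem_Ioi.mp hx)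
        have : 0 < u x - u t1 := by
          have := h1
          rw [slope_def_field] at this
          have h3 := (div_pos_iff).mp this
          rcases h3 with ⟨h4, _⟩ | ⟨_, h4⟩
          · exact h4
          · linarith
        have hux : -K < u x := by rw [← hneg]; linarith
        have : |u x| < K := abs_lt.mpr ⟨hux, h2⟩
        exact absurd hxS.2 (not_lt.mpr this.le)
    obtain ⟨w, hw, hIoo⟩ := mem_nhdsGT_iff_exists_Ioo_subset.mp hev
    obtain ⟨s, hsS, hs_lt⟩ := (csInf_lt_iff hS_bdd hS_ne).mp (show sInf S < w from hw)
    have hs_ge : t1 ≤ s := csInf_le hS_bdd hsS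
    have hs_ne : t1 ≠ s := fun h => ht1_notS (h ▸ hsS)
    exact (hIoo ⟨lt_of_le_of_ne hs_ge hs_ne, hs_lt⟩) hsS
  have hbd : ∀ t, -(2*a) ≤ t → |u t| ≤ K := by
    intro t ht
    rcases le_or_gt t 0 with h | h
    · exact hinit t ht h
    · exact hbd0 t h.le
  -- ρ := |σ| / (-μ) < 1
  set ρ : ℝ := |σ| / (-μ) with hρdef
  have hρ0 : 0 ≤ ρ := div_nonneg (abs_nonneg σ) (by linarith)
  have hρ1 : ρ < 1 := (div_lt_one (by linarith)).mpr hcone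
  -- Step 2: the decay step.
  have hstep : ∀ T B : ℝ, 0 ≤ T → (∀ s, T ≤ s → |u s| ≤ B) →
      ∀ ε : ℝ, 0 < ε → ∃ T', 0 ≤ T' ∧ ∀ t, T' ≤ t → |u t| ≤ ρ * B + ε := by
    intro T B hT hB ε hε
    have hB0 : 0 ≤ B := (abs_nonneg (u T)).trans (hB T le_rfl)
    set R : ℝ := ρ * B with hRdef
    have hR0 : 0 ≤ R := mul_nonneg hρ0 hB0
    have hμR : μ * R = -(|σ| * B) := by
      have hne : -μ ≠ 0 := by linarith
      rw [hRdef, hρdef]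
      field_simp
      rw [show μ * |σ| * B / μ = |σ| * B * (μ / μ) by ring, div_self hμ.ne, mul_one]
    set T0 : ℝ := T + 2*a with hT0def
    have hT00 : 0 ≤ T0 := by simp only [hT0def]; linarith
    -- delayed term bound for t ≥ T0
    have hdel : ∀ t, T0 ≤ t → |σ * u (t - a - c * u t)| ≤ |σ| * B := by
      intro t ht
      have htnn : (0:ℝ) ≤ t := hT00.trans ht
      have hcu : |c * u t| ≤ a := by
        rw [abs_mul, ← hca]
        exact mul_le_mul_of_nonneg_left (hbd t (by linarith)) (abs_nonneg c)
      have h1 := abs_le.mp hcu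
      have hτT : T ≤ t - a - c * u t := by
        simp only [hT0def] at ht; linarith [h1.2]
      rw [abs_mul]
      exact mul_le_mul_of_nonneg_left (hB _ hτT) (abs_nonneg σ)
    -- derivative of u as HasDerivAt on (T0, ∞)
    have hud : ∀ x, T0 < x →
        HasDerivAt u (μ * u x + σ * u (x - a - c * u x)) x := by
      intro x hx
      have hx0 : (0:ℝ) < x := lt_of_le_of_lt hT00 hx
      exact (hu_deriv x hx0.le).hasDerivAt (Ici_mem_nhds hx0)
    -- h t = exp(-μ t) (u t - R) is antitone on [T0, ∞)
    have hanti : AntitoneOn (fun t => Real.exp (-μ * t) * (u t - R)) (Ici T0) := by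
      apply antitoneOn_of_deriv_nonpos (convex_Ici T0)
      · exact ((Real.continuous_exp.comp (continuous_const.mul continuous_id)).mul
          (hu_cont.sub continuous_const)).continuousOn
      · intro x hx
        rw [interior_Ici] at hx
        have hd := ((((hasDerivAt_id' x).const_mul (-μ)).exp).mul
          ((hud x hx).sub_const R))
        exact hd.differentiableAt.differentiableWithinAt
      · intro x hx
        rw [interior_Ici] at hx
        have hd := ((((hasDerivAt_id' x).const_mul (-μ)).exp).mul
          ((hud x hx).sub_const R))
        rw [show deriv (fun t => Real.exp (-μ * t) * (u t - R)) x = _ from hd.deriv]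
        have hexp : (0:ℝ) < Real.exp (-μ * x) := Real.exp_pos _
        have hτ := abs_le.mp (hdel x hx.le)
        nlinarith [hτ.2, hexp]
    -- g t = exp(-μ t) (u t + R) is monotone on [T0, ∞)
    have hmono : MonotoneOn (fun t => Real.exp (-μ * t) * (u t + R)) (Ici T0) := by
      apply monotoneOn_of_deriv_nonneg (convex_Ici T0)
      · exact ((Real.continuous_exp.comp (continuous_const.mul continuous_id)).mul
          (hu_cont.add continuous_const)).continuousOn
      · intro x hx
        rw [interior_Ici] at hx
        have hd := ((((hasDerivAt_id' x).const_mul (-μ)).exp).mul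
          ((hud x hx).add_const R))
        exact hd.differentiableAt.differentiableWithinAt
      · intro x hx
        rw [interior_Ici] at hx
        have hd := ((((hasDerivAt_id' x).const_mul (-μ)).exp).mul
          ((hud x hx).add_const R))
        rw [show deriv (fun t => Real.exp (-μ * t) * (u t + R)) x = _ from hd.deriv]
        have hexp : (0:ℝ) < Real.exp (-μ * x) := Real.exp_pos _
        have hτ := abs_le.mp (hdel x hx.le)
        nlinarith [hτ.1, hexp]
    -- choose Δ with exp(μ Δ) * (2K) < ε
    have hlim : Tendsto (fun x : ℝ => Real.exp (μ * x) * (2*K)) atTop (nhds 0) := by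
      have h1 : Tendsto (fun x : ℝ => μ * x) atTop atBot := by
        have h2 : Tendsto (fun x : ℝ => (-μ) * x) atTop atTop :=
          Tendsto.const_mul_atTop (by linarith) tendsto_id
        have h3 := tendsto_neg_atTop_atBot.comp h2
        convert h3 using 1
        funext x; simp [Function.comp]
      have h4 := Real.tendsto_exp_atBot.comp h1
      simpa using h4.mul_const (2*K)
    obtain ⟨Δ, hΔε, hΔ0⟩ := ((hlim.eventually_lt_const hε).and (eventually_ge_atTop (0:ℝ))).exists
    refine ⟨T0 + Δ, by linarith, fun t ht => ?_⟩
    have htT0 : T0 ≤ t := by linarith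
    have hexp_le : Real.exp (μ * (t - T0)) ≤ Real.exp (μ * Δ) := by
      apply Real.exp_le_exp.mpr
      apply mul_le_mul_of_nonpos_left (by linarith) hμ.le
    have hexp_nn : (0:ℝ) ≤ Real.exp (μ * (t - T0)) := (Real.exp_pos _).le
    have h2K : Real.exp (μ * (t - T0)) * (2*K) ≤ ε := by
      calc Real.exp (μ * (t - T0)) * (2*K) ≤ Real.exp (μ * Δ) * (2*K) :=
            mul_le_mul_of_nonneg_right hexp_le (by linarith)
        _ ≤ ε := hΔε.le
    have huT0 := abs_le.mp (hbd T0 (by linarith))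
    have hee : ∀ s : ℝ, Real.exp (μ * t) * Real.exp (-μ * s) = Real.exp (μ * (t - s)) := by
      intro s; rw [← Real.exp_add]; congr 1; ring
    have het : Real.exp (μ * t) * Real.exp (-μ * t) = 1 := by
      rw [← Real.exp_add]; norm_num
    -- upper bound
    have hup : u t ≤ R + ε := by
      have h1 := hanti (self_mem_Ici) (mem_Ici.mpr htT0) htT0
      have h2 := mul_le_mul_of_nonneg_left h1 (Real.exp_pos (μ * t)).le
      rw [← mul_assoc, ← mul_assoc, het, hee, one_mul] at h2
      -- h2 : u t - R ≤ exp(μ(t-T0)) * (u T0 - R)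
      have h3 : Real.exp (μ * (t - T0)) * (u T0 - R) ≤ Real.exp (μ * (t - T0)) * (2*K) :=
        mul_le_mul_of_nonneg_left (by linarith [huT0.2]) hexp_nn
      linarith
    -- lower bound
    have hlow : -(R + ε) ≤ u t := by
      have h1 := hmono (self_mem_Ici) (mem_Ici.mpr htT0) htT0
      have h2 := mul_le_mul_of_nonneg_left h1 (Real.exp_pos (μ * t)).le
      rw [← mul_assoc, ← mul_assoc, het, hee, one_mul] at h2
      -- h2 : exp(μ(t-T0)) * (u T0 + R) ≤ u t + R
      have h3 : Real.exp (μ * (t - T0)) * (-(2*K)) ≤ Real.exp (μ * (t - T0)) * (u T0 + R) :=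
        mul_le_mul_of_nonneg_left (by linarith [huT0.1]) hexp_nn
      have h4 : Real.exp (μ * (t - T0)) * (-(2*K)) = -(Real.exp (μ * (t - T0)) * (2*K)) := by ring
      linarith
    exact abs_le.mpr ⟨hlow, hup⟩
  -- Step 3: iterate the decay step.
  have hmain : ∀ ε : ℝ, 0 < ε → ∀ n : ℕ, ∃ T, 0 ≤ T ∧ ∀ t, T ≤ t → |u t| ≤ ρ^n * K + ε := by
    intro ε hε n
    induction n with
    | zero =>
      exact ⟨0, le_rfl, fun t ht => by
        simpa using (hbd0 t ht).trans (by linarith)⟩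
    | succ n ih =>
      obtain ⟨T, hT0, hT⟩ := ih
      obtain ⟨T', hT'0, hT'⟩ := hstep T (ρ^n * K + ε) hT0 hT ((1 - ρ) * ε)
        (mul_pos (by linarith) hε)
      refine ⟨T', hT'0, fun t ht => ?_⟩
      calc |u t| ≤ ρ * (ρ^n * K + ε) + (1 - ρ) * ε := hT' t ht
        _ = ρ^(n+1) * K + ε := by ring
  -- conclude
  rw [Metric.tendsto_atTop]
  intro ε hε
  have hpow : Tendsto (fun n : ℕ => ρ^n * K) atTop (nhds 0) := by
    simpa using (tendsto_pow_atTop_nhds_zero_of_lt_one hρ0 hρ1).mul_const K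
  obtain ⟨n, hn⟩ := (hpow.eventually_lt_const (show (0:ℝ) < ε/3 by linarith)).exists
  obtain ⟨T, hT0, hT⟩ := hmain (ε/3) (by linarith) n
  refine ⟨T, fun t ht => ?_⟩
  have := hT t ht
  rw [Real.dist_eq, sub_zero]
  calc |u t| ≤ ρ^n * K + ε/3 := this
    _ < ε/3 + ε/3 := by linarith
    _ < ε := by linarith
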